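/- Let Δ > 1, A = sqrt(1 - Δ^{-2}), and let B₁, B₃ be real with B₁ ≠ 0. The 4×4 real symmetric matrix M = [[B₃, 0, B₁, 0], [0, 1-A+B₃, -Δ^{-1}, B₁], [B₁, -Δ^{-1}, 1+A-B₃, 0], [0, B₁, 0, -B₃]] has characteristic polynomial p(t) = (t² - 2t - B₁² - B₃² + 2B₃A)(t² - B₁² - B₃²), hence its eigenvalues are ±sqrt(B₁²+B₃²) and 1 ± sqrt(1 + B₁² + B₃² - 2B₃A). -/

import Mathlib

open Matrix

/-- Twice the two-site spin-1/2 kink Hamiltonian with field `(B₁,0,B₃)` at site 1. -/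
noncomputable def kinkM (Δ B1 B3 : ℝ) : Matrix (Fin 4) (Fin 4) ℝ :=
  !![B3, 0, B1, 0;
     0, 1 - Real.sqrt (1 - Δ⁻¹^2) + B3, -Δ⁻¹, B1;
     B1, -Δ⁻¹, 1 + Real.sqrt (1 - Δ⁻¹^2) - B3, 0;
     0, B1, 0, -B3]

lemma det4 (a b c d e f g h i j k l m n o p : ℝ) :
    det !![a,b,c,d; e,f,g,h; i,j,k,l; m,n,o,p] =
      a*(f*(k*p-l*o)-g*(j*p-l*n)+h*(j*o-k*n))
      - b*(e*(k*p-l*o)-g*(i*p-l*m)+h*(i*o-k*m))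
      + c*(e*(j*p-l*n)-f*(i*p-l*m)+h*(i*n-j*m))
      - d*(e*(j*o-k*n)-f*(i*o-k*m)+g*(i*n-j*m)) := by
  simp [Matrix.det_succ_row_zero, Fin.sum_univ_succ, Fin.succAbove]
  ring

lemma sq_eq_sq_cases {x y : ℝ} (h : x ^ 2 = y ^ 2) : x = y ∨ x = -y := by
  rcases mul_eq_zero.mp (show (x - y) * (x + y) = 0 by linear_combination h) with h' | h'
  · left; linarith
  · right; linarith

/-- The matrix `M = 2H^{+-}_{[1,2]}(B₁,0,B₃)` has characteristic polynomial
`p(t) = (t² - 2t - B₁² - B₃² + 2B₃A)(t² - B₁² - B₃²)`, hence its eigenvalues are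
`±√(B₁²+B₃²)` and `1 ± √(1 + B₁² + B₃² - 2B₃A)`. -/
theorem stmt4 (Δ B1 B3 : ℝ) (hΔ : 1 < Δ) (hB1 : B1 ≠ 0) :
    (∀ t : ℝ,
      det (t • (1 : Matrix (Fin 4) (Fin 4) ℝ) - kinkM Δ B1 B3) =
        (t^2 - 2*t - B1^2 - B3^2 + 2*B3*Real.sqrt (1 - Δ⁻¹^2)) * (t^2 - B1^2 - B3^2)) ∧
    (∀ t : ℝ,
      det (t • (1 : Matrix (Fin 4) (Fin 4) ℝ) - kinkM Δ B1 B3) = 0 ↔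
        t = Real.sqrt (B1^2 + B3^2) ∨ t = -Real.sqrt (B1^2 + B3^2) ∨
        t = 1 + Real.sqrt (1 + B1^2 + B3^2 - 2*B3*Real.sqrt (1 - Δ⁻¹^2)) ∨
        t = 1 - Real.sqrt (1 + B1^2 + B3^2 - 2*B3*Real.sqrt (1 - Δ⁻¹^2))) := by
  have hΔ0 : (0:ℝ) < Δ := by linarith
  set A := Real.sqrt (1 - Δ⁻¹^2) with hA
  have hA2 : A ^ 2 = 1 - Δ⁻¹^2 := by
    rw [hA, Real.sq_sqrt]
    nlinarith [inv_lt_one_of_one_lt₀ hΔ, inv_pos.mpr hΔ0]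
  have hA0 : 0 ≤ A := Real.sqrt_nonneg _
  have hdet : ∀ t : ℝ,
      det (t • (1 : Matrix (Fin 4) (Fin 4) ℝ) - kinkM Δ B1 B3) =
        (t^2 - 2*t - B1^2 - B3^2 + 2*B3*A) * (t^2 - B1^2 - B3^2) := by
    intro t
    have hM : t • (1 : Matrix (Fin 4) (Fin 4) ℝ) - kinkM Δ B1 B3 =
        !![t - B3, 0, -B1, 0;
           0, t - (1 - A + B3), Δ⁻¹, -B1;
           -B1, Δ⁻¹, t - (1 + A - B3), 0;
           0, -B1, 0, t + B3] := by
      ext i j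
      fin_cases i <;> fin_cases j <;>
        simp [kinkM, Matrix.one_apply, hA]
    rw [hM, det4]
    linear_combination (B3^2 - t^2) * hA2
  refine ⟨hdet, fun t => ?_⟩
  have hDpos : (0:ℝ) < B1^2 + B3^2 := by positivity
  have hD : Real.sqrt (B1^2 + B3^2) ^ 2 = B1^2 + B3^2 := Real.sq_sqrt hDpos.le
  have hEpos : (0:ℝ) < 1 + B1^2 + B3^2 - 2*B3*A := by
    nlinarith [sq_nonneg (1 - B3*A), sq_nonneg B3, sq_nonneg B1, hΔ0,
      sq_nonneg Δ⁻¹, pow_pos (inv_pos.mpr hΔ0) 2, sq_abs B1, abs_pos.mpr hB1]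
  have hE : Real.sqrt (1 + B1^2 + B3^2 - 2*B3*A) ^ 2 = 1 + B1^2 + B3^2 - 2*B3*A :=
    Real.sq_sqrt hEpos.le
  rw [hdet t, mul_eq_zero]
  constructor
  · rintro (h | h)
    · rcases sq_eq_sq_cases (x := t - 1) (y := Real.sqrt (1 + B1^2 + B3^2 - 2*B3*A))
        (by linear_combination h - hE) with h' | h'
      · right; right; left; linarith
      · right; right; right; linarith
    · rcases sq_eq_sq_cases (x := t) (y := Real.sqrt (B1^2 + B3^2))
        (by linear_combination h - hD) with h' | h'
      · left; exact h'
      · right; left; exact h'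
  · rintro (rfl | rfl | rfl | rfl)
    · right; linear_combination hD
    · right; linear_combination hD
    · left; linear_combination hE
    · left; linear_combination hE
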